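/- The weighted total variation distance between plug-in and true posteriors satisfies wTV(π_Ĥ, π_H*) ≤ TV(f_Ĥ, f_H*) + TV(g_Ĥ, g_H*), where wTV integrates the pointwise TV of the posteriors against the true marginal density. -/

import Mathlib

open MeasureTheory ProbabilityTheory Real
open scoped NNReal ENNReal

lemma gauss_cont (v : ℝ≥0) : Continuous (fun p : ℝ × ℝ => gaussianPDFReal p.2 v p.1) := by
  unfold gaussianPDFReal; fun_prop

lemma gauss_le (μ x : ℝ) (v : ℝ≥0) : gaussianPDFReal μ v x ≤ (Real.sqrt (2 * π * v))⁻¹ := by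
  rw [gaussianPDFReal]
  have h1 : rexp (- (x - μ)^2 / (2 * v)) ≤ 1 := by
    rw [Real.exp_le_one_iff]
    apply div_nonpos_of_nonpos_of_nonneg
    · simp [sq_nonneg]
    · positivity
  calc (√(2 * π * v))⁻¹ * rexp (- (x - μ)^2 / (2 * v)) ≤ (√(2 * π * v))⁻¹ * 1 := by
        apply mul_le_mul_of_nonneg_left h1 (by positivity)
    _ = _ := mul_one _

lemma g_meas (v : ℝ≥0) (H : Measure ℝ) [SFinite H] :
    StronglyMeasurable (fun θ => ∫ ξ, gaussianPDFReal ξ v θ ∂H) :=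
  ((gauss_cont v).stronglyMeasurable).integral_prod_right'

lemma g_int_H (v : ℝ≥0) (θ : ℝ) (H : Measure ℝ) [IsFiniteMeasure H] :
    Integrable (fun ξ => gaussianPDFReal ξ v θ) H := by
  apply (integrable_const ((Real.sqrt (2 * π * v))⁻¹)).mono'
  · exact ((gauss_cont v).comp (continuous_const.prodMk continuous_id)).aestronglyMeasurable
  · exact ae_of_all _ fun ξ => by
      rw [Real.norm_eq_abs, abs_of_nonneg (gaussianPDFReal_nonneg _ _ _)]
      exact gauss_le _ _ _

lemma int_of_pos {f : ℝ → ℝ} {F : ℝ} (h : F = ∫ θ, f θ) (hF : 0 < F) :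
    Integrable f := by
  by_contra hi
  rw [integral_undef hi] at h
  exact absurd h (by linarith)

lemma lint_g (c : ℝ) (hc : 0 < c) (H : Measure ℝ) [IsProbabilityMeasure H]
    (g : ℝ → ℝ) (hg : ∀ θ, g θ = ∫ ξ, gaussianPDFReal ξ ((c^2).toNNReal) θ ∂H) :
    ∫⁻ θ, ENNReal.ofReal (g θ) = 1 := by
  set K := ((c^2).toNNReal) with hKdef
  have hK : K ≠ 0 := by
    simp only [hKdef, ne_eq, Real.toNNReal_eq_zero, not_le]
    positivity
  have h1 : ∀ θ, ENNReal.ofReal (g θ)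
      = ∫⁻ ξ, ENNReal.ofReal (gaussianPDFReal ξ K θ) ∂H := fun θ => by
    rw [hg θ, ofReal_integral_eq_lintegral_ofReal (g_int_H K θ H)
      (ae_of_all _ fun ξ => gaussianPDFReal_nonneg _ _ _)]
  simp_rw [h1]
  rw [lintegral_lintegral_swap (((gauss_cont K).measurable.ennreal_ofReal).aemeasurable)]
  simp_rw [lintegral_gaussianPDFReal_eq_one _ hK]
  simp

lemma lint_T (h : ℝ → ℝ) (hm : Measurable h) (hnn : ∀ θ, 0 ≤ h θ)
    (hint : ∀ x : ℝ, Integrable (fun θ => gaussianPDFReal θ 1 x * h θ)) :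
    ∫⁻ x, ENNReal.ofReal (∫ θ, gaussianPDFReal θ 1 x * h θ)
      = ∫⁻ θ, ENNReal.ofReal (h θ) := by
  have h1 : ∀ x, ENNReal.ofReal (∫ θ, gaussianPDFReal θ 1 x * h θ)
      = ∫⁻ θ, ENNReal.ofReal (gaussianPDFReal θ 1 x) * ENNReal.ofReal (h θ) := fun x => by
    rw [ofReal_integral_eq_lintegral_ofReal (hint x)
      (ae_of_all _ fun θ => mul_nonneg (gaussianPDFReal_nonneg _ _ _) (hnn θ))]
    congr 1; ext θ
    exact ENNReal.ofReal_mul (gaussianPDFReal_nonneg _ _ _)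
  simp_rw [h1]
  have hmeas : AEMeasurable (Function.uncurry fun (x θ : ℝ) =>
      ENNReal.ofReal (gaussianPDFReal θ 1 x) * ENNReal.ofReal (h θ))
      (volume.prod volume) := by
    apply Measurable.aemeasurable
    exact ((gauss_cont 1).measurable.ennreal_ofReal).mul
      ((hm.comp measurable_snd).ennreal_ofReal)
  rw [lintegral_lintegral_swap hmeas]
  have h2 : ∀ θ : ℝ, ∫⁻ x, ENNReal.ofReal (gaussianPDFReal θ 1 x) * ENNReal.ofReal (h θ)
      = ENNReal.ofReal (h θ) := fun θ => by
    rw [lintegral_mul_const _ ((measurable_gaussianPDFReal θ 1).ennreal_ofReal),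
      lintegral_gaussianPDFReal_eq_one θ one_ne_zero, one_mul]
  simp_rw [h2]

lemma ptwise (a gh gs fh fs : ℝ) (ha : 0 ≤ a) (hgh : 0 < gh)
    (hfh : 0 < fh) (hfs : 0 < fs) :
    |a * gh / fh - a * gs / fs| * fs
      ≤ a * gh * (|fh - fs| / fh) + a * |gh - gs| := by
  have key : (a * gh / fh - a * gs / fs) * fs
      = a * gh * ((fs - fh) / fh) + a * (gh - gs) := by
    field_simp
    ring
  calc |a * gh / fh - a * gs / fs| * fs
      = |(a * gh / fh - a * gs / fs) * fs| := by
        rw [abs_mul, abs_of_pos hfs]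
    _ = |a * gh * ((fs - fh) / fh) + a * (gh - gs)| := by rw [key]
    _ ≤ |a * gh * ((fs - fh) / fh)| + |a * (gh - gs)| := abs_add_le _ _
    _ = a * gh * (|fh - fs| / fh) + a * |gh - gs| := by
        rw [abs_mul, abs_mul, abs_mul, abs_div, abs_of_nonneg ha,
          abs_of_pos hgh, abs_of_pos hfh, abs_sub_comm]

lemma contφ (x : ℝ) : Continuous (fun θ : ℝ => gaussianPDFReal θ 1 x) := by
  unfold gaussianPDFReal; fun_prop

/-- The weighted total variation distance between the plug-in and true posteriors satisfies
`wTV(π_Ĥ, π_H*) ≤ TV(f_Ĥ, f_H*) + TV(g_Ĥ, g_H*)`, where for a mixing measure `H`,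
`g_H(θ) = ∫ φ_c(θ-ξ)dH(ξ)` is the prior density, `f_H(x) = ∫ φ(x-θ) g_H(θ) dθ` is the
marginal density, `π_H(θ|x) = φ(x-θ)g_H(θ)/f_H(x)` the posterior density, and `wTV`
integrates the pointwise TV of the posteriors against the true marginal density `f_H*`. -/
theorem wTV_le_TV_sum
    (c : ℝ) (hc : 0 < c)
    (Hhat Hstar : Measure ℝ) [IsProbabilityMeasure Hhat] [IsProbabilityMeasure Hstar]
    (ghat gstar fhat fstar : ℝ → ℝ)
    (hghat : ∀ θ, ghat θ = ∫ ξ, gaussianPDFReal ξ ((c ^ 2).toNNReal) θ ∂Hhat)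
    (hgstar : ∀ θ, gstar θ = ∫ ξ, gaussianPDFReal ξ ((c ^ 2).toNNReal) θ ∂Hstar)
    (hfhat : ∀ x, fhat x = ∫ θ, gaussianPDFReal θ 1 x * ghat θ)
    (hfstar : ∀ x, fstar x = ∫ θ, gaussianPDFReal θ 1 x * gstar θ)
    (hposhat : ∀ x, 0 < fhat x) (hposstar : ∀ x, 0 < fstar x)
    (hposg : ∀ θ, 0 < ghat θ) (hposg' : ∀ θ, 0 < gstar θ) :
    ∫ x, ((1 / 2) * ∫ θ, |gaussianPDFReal θ 1 x * ghat θ / fhat x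
            - gaussianPDFReal θ 1 x * gstar θ / fstar x|) * fstar x
      ≤ (1 / 2) * (∫ x, |fhat x - fstar x|) + (1 / 2) * (∫ θ, |ghat θ - gstar θ|) := by
  -- measurability of the priors
  have hghm : Measurable ghat := by
    rw [funext hghat]; exact (g_meas _ Hhat).measurable
  have hgsm : Measurable gstar := by
    rw [funext hgstar]; exact (g_meas _ Hstar).measurable
  have hΔgm : Measurable (fun θ => |ghat θ - gstar θ|) := (hghm.sub hgsm).abs
  -- lintegrals of priors
  have hlg_hat : ∫⁻ θ, ENNReal.ofReal (ghat θ) = 1 := lint_g c hc Hhat ghat hghat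
  have hlg_star : ∫⁻ θ, ENNReal.ofReal (gstar θ) = 1 := lint_g c hc Hstar gstar hgstar
  -- integrability of the priors
  have hint_ghat : Integrable ghat :=
    ⟨hghm.aestronglyMeasurable, by
      rw [hasFiniteIntegral_iff_ofReal (ae_of_all _ fun θ => (hposg θ).le), hlg_hat]
      exact ENNReal.one_lt_top⟩
  have hint_gstar : Integrable gstar :=
    ⟨hgsm.aestronglyMeasurable, by
      rw [hasFiniteIntegral_iff_ofReal (ae_of_all _ fun θ => (hposg' θ).le), hlg_star]
      exact ENNReal.one_lt_top⟩
  have hint_Δg : Integrable (fun θ => |ghat θ - gstar θ|) := (hint_ghat.sub hint_gstar).abs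
  -- per-x integrability of the posterior numerators
  have Ihat : ∀ x, Integrable (fun θ => gaussianPDFReal θ 1 x * ghat θ) :=
    fun x => int_of_pos (hfhat x) (hposhat x)
  have Istar : ∀ x, Integrable (fun θ => gaussianPDFReal θ 1 x * gstar θ) :=
    fun x => int_of_pos (hfstar x) (hposstar x)
  -- per-x integrability of φ * |Δg|
  have Tint : ∀ x, Integrable (fun θ => gaussianPDFReal θ 1 x * |ghat θ - gstar θ|) := by
    intro x
    apply ((Ihat x).add (Istar x)).mono'
      (((contφ x).measurable.mul hΔgm).aestronglyMeasurable)
    refine ae_of_all _ fun θ => ?_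
    simp only [Pi.add_apply, Pi.mul_apply]
    rw [Real.norm_eq_abs,
      abs_of_nonneg (mul_nonneg (gaussianPDFReal_nonneg _ _ _) (abs_nonneg _)), ← mul_add]
    exact mul_le_mul_of_nonneg_left
      ((abs_sub _ _).trans (by
        rw [abs_of_pos (hposg θ), abs_of_pos (hposg' θ)])) (gaussianPDFReal_nonneg _ _ _)
  -- the function T
  have hTm : StronglyMeasurable (fun x => ∫ θ, gaussianPDFReal θ 1 x * |ghat θ - gstar θ|) := by
    exact StronglyMeasurable.integral_prod_right'
      (f := fun p : ℝ × ℝ => gaussianPDFReal p.2 1 p.1 * |ghat p.2 - gstar p.2|)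
      (((gauss_cont 1).measurable.mul (hΔgm.comp measurable_snd)).stronglyMeasurable)
  have hTnn : ∀ x, 0 ≤ ∫ θ, gaussianPDFReal θ 1 x * |ghat θ - gstar θ| :=
    fun x => integral_nonneg fun θ => mul_nonneg (gaussianPDFReal_nonneg _ _ _) (abs_nonneg _)
  have lintT : ∫⁻ x, ENNReal.ofReal (∫ θ, gaussianPDFReal θ 1 x * |ghat θ - gstar θ|)
      = ∫⁻ θ, ENNReal.ofReal (|ghat θ - gstar θ|) :=
    lint_T _ hΔgm (fun θ => abs_nonneg _) Tint
  have hint_T : Integrable (fun x => ∫ θ, gaussianPDFReal θ 1 x * |ghat θ - gstar θ|) := by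
    refine ⟨hTm.aestronglyMeasurable, ?_⟩
    rw [hasFiniteIntegral_iff_ofReal (ae_of_all _ hTnn), lintT]
    exact (hasFiniteIntegral_iff_ofReal (ae_of_all _ fun θ => abs_nonneg _)).mp hint_Δg.2
  have hTeq : (∫ x, ∫ θ, gaussianPDFReal θ 1 x * |ghat θ - gstar θ|)
      = ∫ θ, |ghat θ - gstar θ| := by
    rw [integral_eq_lintegral_of_nonneg_ae (ae_of_all _ hTnn) hTm.aestronglyMeasurable,
      integral_eq_lintegral_of_nonneg_ae (ae_of_all _ fun θ => abs_nonneg _)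
        hΔgm.aestronglyMeasurable, lintT]
  -- integrability of the marginals
  have hfhm : Measurable fhat := by
    rw [funext hfhat]
    exact (StronglyMeasurable.integral_prod_right'
      (f := fun p : ℝ × ℝ => gaussianPDFReal p.2 1 p.1 * ghat p.2)
      (((gauss_cont 1).measurable.mul (hghm.comp measurable_snd)).stronglyMeasurable)).measurable
  have hfsm : Measurable fstar := by
    rw [funext hfstar]
    exact (StronglyMeasurable.integral_prod_right'
      (f := fun p : ℝ × ℝ => gaussianPDFReal p.2 1 p.1 * gstar p.2)
      (((gauss_cont 1).measurable.mul (hgsm.comp measurable_snd)).stronglyMeasurable)).measurable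
  have hlf_hat : ∫⁻ x, ENNReal.ofReal (fhat x) = 1 := by
    simp_rw [funext hfhat]
    rw [lint_T ghat hghm (fun θ => (hposg θ).le) Ihat]
    exact hlg_hat
  have hlf_star : ∫⁻ x, ENNReal.ofReal (fstar x) = 1 := by
    simp_rw [funext hfstar]
    rw [lint_T gstar hgsm (fun θ => (hposg' θ).le) Istar]
    exact hlg_star
  have hint_fhat : Integrable fhat :=
    ⟨hfhm.aestronglyMeasurable, by
      rw [hasFiniteIntegral_iff_ofReal (ae_of_all _ fun x => (hposhat x).le), hlf_hat]
      exact ENNReal.one_lt_top⟩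
  have hint_fstar : Integrable fstar :=
    ⟨hfsm.aestronglyMeasurable, by
      rw [hasFiniteIntegral_iff_ofReal (ae_of_all _ fun x => (hposstar x).le), hlf_star]
      exact ENNReal.one_lt_top⟩
  have hint_Δf : Integrable (fun x => |fhat x - fstar x|) := (hint_fhat.sub hint_fstar).abs
  -- pointwise bound in x
  have keyx : ∀ x, ((1 / 2) * ∫ θ, |gaussianPDFReal θ 1 x * ghat θ / fhat x
        - gaussianPDFReal θ 1 x * gstar θ / fstar x|) * fstar x
      ≤ (1 / 2) * (|fhat x - fstar x|
          + ∫ θ, gaussianPDFReal θ 1 x * |ghat θ - gstar θ|) := by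
    intro x
    have hrw : ((1 / 2 : ℝ) * ∫ θ, |gaussianPDFReal θ 1 x * ghat θ / fhat x
          - gaussianPDFReal θ 1 x * gstar θ / fstar x|) * fstar x
        = (1 / 2) * ∫ θ, (|gaussianPDFReal θ 1 x * ghat θ / fhat x
          - gaussianPDFReal θ 1 x * gstar θ / fstar x| * fstar x) := by
      rw [integral_mul_const]; ring
    rw [hrw]
    have hmono : (∫ θ, (|gaussianPDFReal θ 1 x * ghat θ / fhat x
          - gaussianPDFReal θ 1 x * gstar θ / fstar x| * fstar x))
        ≤ ∫ θ, (gaussianPDFReal θ 1 x * ghat θ * (|fhat x - fstar x| / fhat x)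
            + gaussianPDFReal θ 1 x * |ghat θ - gstar θ|) := by
      apply integral_mono_of_nonneg
      · exact ae_of_all _ fun θ => mul_nonneg (abs_nonneg _) (hposstar x).le
      · exact ((Ihat x).mul_const _).add (Tint x)
      · exact ae_of_all _ fun θ => ptwise _ _ _ _ _
          (gaussianPDFReal_nonneg _ _ _) (hposg θ) (hposhat x) (hposstar x)
    have hsplit : (∫ θ, (gaussianPDFReal θ 1 x * ghat θ * (|fhat x - fstar x| / fhat x)
          + gaussianPDFReal θ 1 x * |ghat θ - gstar θ|))
        = |fhat x - fstar x| + ∫ θ, gaussianPDFReal θ 1 x * |ghat θ - gstar θ| := by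
      rw [integral_add ((Ihat x).mul_const _) (Tint x)]
      congr 1
      rw [integral_mul_const, ← hfhat x, mul_comm,
        div_mul_cancel₀ _ (ne_of_gt (hposhat x))]
    calc (1 / 2 : ℝ) * ∫ θ, (|gaussianPDFReal θ 1 x * ghat θ / fhat x
          - gaussianPDFReal θ 1 x * gstar θ / fstar x| * fstar x)
        ≤ (1 / 2) * ∫ θ, (gaussianPDFReal θ 1 x * ghat θ * (|fhat x - fstar x| / fhat x)
            + gaussianPDFReal θ 1 x * |ghat θ - gstar θ|) := by linarith
      _ = (1 / 2) * (|fhat x - fstar x|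
            + ∫ θ, gaussianPDFReal θ 1 x * |ghat θ - gstar θ|) := by rw [hsplit]
  -- conclude
  calc ∫ x, ((1 / 2) * ∫ θ, |gaussianPDFReal θ 1 x * ghat θ / fhat x
          - gaussianPDFReal θ 1 x * gstar θ / fstar x|) * fstar x
      ≤ ∫ x, (1 / 2) * (|fhat x - fstar x|
          + ∫ θ, gaussianPDFReal θ 1 x * |ghat θ - gstar θ|) := by
        apply integral_mono_of_nonneg
        · exact ae_of_all _ fun x => mul_nonneg (mul_nonneg (by norm_num)
            (integral_nonneg fun θ => abs_nonneg _)) (hposstar x).le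
        · exact (hint_Δf.add hint_T).const_mul _
        · exact ae_of_all _ keyx
    _ = (1 / 2) * (∫ x, |fhat x - fstar x|) + (1 / 2) * (∫ θ, |ghat θ - gstar θ|) := by
        rw [integral_const_mul, integral_add hint_Δf hint_T, hTeq, mul_add]
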